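/- Consider the double-integrator system ẋ = A x + B v on R^6 with A = [[0,I3],[0,0]], B = [0;I3]. Let P ≻ 0 satisfy (A - B BᵀP)ᵀP + P(A - B BᵀP) ⪯ -αP for some α > 0, let ρ, ε > 0 be such that xᵀPx ≤ ε implies ‖BᵀPx‖² ≤ ρ, let C ⊂ R^3 be compact convex with {v: ‖v‖² ≤ ρ} ⊆ C and 0 ∈ int C, and let γ ≥ 1. Then along any solution of ẋ = Ax + B sat(-γ BᵀPx) with x(0)ᵀPx(0) ≤ ε, the function V(t) = x(t)ᵀPx(t) satisfies V̇(t) ≤ -α V(t) whenever V(t) ≤ ε; consequently { x : xᵀPx ≤ ε } is forward invariant and every solution starting in it converges exponentially to the origin (V(t) ≤ e^{-αt} V(0)). -/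

import Mathlib

open Matrix Filter Topology

private lemma dpT' {n : Type*} [Fintype n] {m : Type*} [Fintype m]
    (M : Matrix n m ℝ) (a : n → ℝ) (b : m → ℝ) : a ⬝ᵥ (M *ᵥ b) = (Mᵀ *ᵥ a) ⬝ᵥ b := by
  rw [Matrix.dotProduct_mulVec, ← Matrix.vecMul_transpose, Matrix.transpose_transpose]

private lemma quadDeriv' {n : Type*} [Fintype n] (P : Matrix n n ℝ) (x : ℝ → (n → ℝ)) (x' : n → ℝ)
    (t : ℝ) (hx : HasDerivAt x x' t) :
    HasDerivAt (fun s => x s ⬝ᵥ (P *ᵥ x s)) (x' ⬝ᵥ (P *ᵥ x t) + x t ⬝ᵥ (P *ᵥ x')) t := by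
  have hxi : ∀ i, HasDerivAt (fun s => x s i) (x' i) t := fun i => hasDerivAt_pi.mp hx i
  have h : HasDerivAt (fun s => ∑ i, x s i * ∑ j, P i j * x s j)
      (∑ i, (x' i * ∑ j, P i j * x t j + x t i * ∑ j, P i j * x' j)) t := by
    apply HasDerivAt.fun_sum
    intro i _
    exact (hxi i).mul (HasDerivAt.fun_sum fun j _ => (hxi j).const_mul (P i j))
  have e1 : (fun s => x s ⬝ᵥ (P *ᵥ x s)) = fun s => ∑ i, x s i * ∑ j, P i j * x s j := by
    funext s; simp [dotProduct, Matrix.mulVec]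
  rw [e1]
  convert h using 1
  simp [dotProduct, Matrix.mulVec, Finset.sum_add_distrib]

private lemma auxInv' (f f' : ℝ → ℝ) (α ε : ℝ) (hα : 0 < α) (hε : 0 < ε)
    (hf : ∀ t, HasDerivAt f (f' t) t) (hf0 : f 0 ≤ ε)
    (hdec : ∀ t, f t ≤ ε → f' t ≤ -α * f t) :
    ∀ t, 0 ≤ t → f t ≤ ε ∧ f t ≤ Real.exp (-α * t) * f 0 := by
  have hcont : Continuous f := by
    apply continuous_iff_continuousAt.mpr
    exact fun t => (hf t).continuousAt
  have hinv : ∀ t, 0 ≤ t → f t ≤ ε := by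
    intro t₀ ht₀
    by_contra hgt
    push_neg at hgt
    set S : Set ℝ := {t | t ∈ Set.Icc (0:ℝ) t₀ ∧ f t ≤ ε} with hS
    have hSne : S.Nonempty := ⟨0, ⟨le_refl 0, ht₀⟩, hf0⟩
    have hSbdd : BddAbove S := ⟨t₀, fun t ht => ht.1.2⟩
    have hSclosed : IsClosed S :=
      (isClosed_Icc).inter (isClosed_le hcont continuous_const)
    set T := sSup S with hT
    have hTS : T ∈ S := hSclosed.csSup_mem hSne hSbdd
    have hTle : f T ≤ ε := hTS.2
    have hTlt : T < t₀ := lt_of_le_of_ne hTS.1.2 (fun h => by rw [h] at hTle; linarith)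
    have hgtT : ∀ s, T < s → s ≤ t₀ → ε < f s := by
      intro s hs hs'
      by_contra hle
      push_neg at hle
      have : s ∈ S := ⟨⟨le_trans hTS.1.1 hs.le, hs'⟩, hle⟩
      exact absurd (le_csSup hSbdd this) (not_le.mpr hs)
    have hfT : f T = ε := by
      refine le_antisymm hTle ?_
      have h1 : Tendsto f (𝓝[>] T) (𝓝 (f T)) :=
        (hcont.tendsto T).mono_left nhdsWithin_le_nhds
      refine ge_of_tendsto h1 ?_
      filter_upwards [Ioo_mem_nhdsGT_of_mem (Set.left_mem_Ico.mpr hTlt)] with s hs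
      exact (hgtT s hs.1 hs.2.le).le
    have hd : f' T < 0 := lt_of_le_of_lt (hdec T hTle) (by rw [hfT]; nlinarith)
    have hslope := hasDerivAt_iff_tendsto_slope.mp (hf T)
    have h2 : ∀ᶠ s in 𝓝[>] T, slope f T s < 0 := by
      have h3 : Tendsto (slope f T) (𝓝[>] T) (𝓝 (f' T)) :=
        hslope.mono_left (nhdsWithin_mono T (fun s hs => ne_of_gt hs))
      exact h3.eventually_lt_const hd
    have h4 : ∀ᶠ s in 𝓝[>] T, s < t₀ :=
      eventually_nhdsWithin_of_eventually_nhds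
        ((tendsto_id (x := 𝓝 T)).eventually_lt_const hTlt)
    have h5 : ∀ᶠ s in 𝓝[>] T, T < s := eventually_mem_nhdsWithin
    obtain ⟨s, hs1, hs2, hs3⟩ := (h2.and (h4.and h5)).exists
    have hfs : f s < f T := by
      have hden : (0:ℝ) < s - T := sub_pos.mpr hs3
      rw [slope_def_field] at hs1
      have h6 : (f s - f T) / (s - T) < 0 := by
        simpa [div_eq_iff, slope] using hs1
      rcases div_neg_iff.mp h6 with ⟨h7, h8⟩ | ⟨h7, h8⟩
      · linarith
      · linarith
    have := hgtT s hs3 hs2.le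
    rw [hfT] at hfs
    linarith
  refine fun t ht => ⟨hinv t ht, ?_⟩
  set g : ℝ → ℝ := fun s => Real.exp (α * s) * f s with hg
  have hgd : ∀ s, HasDerivAt g (Real.exp (α * s) * α * f s + Real.exp (α * s) * f' s) s := by
    intro s
    have := (((hasDerivAt_id s).const_mul α).exp).mul (hf s)
    exact this.congr_deriv (by simp)
  have hanti : AntitoneOn g (Set.Ici 0) := by
    apply antitoneOn_of_deriv_nonpos (convex_Ici 0)
    · exact Continuous.continuousOn (by
        apply continuous_iff_continuousAt.mpr
        exact fun s => (hgd s).continuousAt)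
    · intro s _
      exact (hgd s).differentiableAt.differentiableWithinAt
    · intro s hs
      rw [interior_Ici] at hs
      rw [(hgd s).deriv]
      have h1 : f' s ≤ -α * f s := hdec s (hinv s (le_of_lt hs))
      have h2 : 0 < Real.exp (α * s) := Real.exp_pos _
      nlinarith
  have hg0 : g t ≤ g 0 := hanti Set.self_mem_Ici ht ht
  have hgz : g 0 = f 0 := by simp [hg]
  rw [hgz] at hg0
  have hexp : Real.exp (-α * t) * Real.exp (α * t) = 1 := by
    rw [← Real.exp_add]; ring_nf; exact Real.exp_zero
  calc f t = Real.exp (-α * t) * (Real.exp (α * t) * f t) := by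
        rw [← mul_assoc, hexp, one_mul]
    _ ≤ Real.exp (-α * t) * f 0 :=
        mul_le_mul_of_nonneg_left hg0 (Real.exp_pos _).le

/-- The double-integrator state matrix `A = [[0, I₃],[0, 0]]`. -/
def Amat : Matrix (Fin 3 ⊕ Fin 3) (Fin 3 ⊕ Fin 3) ℝ := Matrix.fromBlocks 0 1 0 0

/-- The double-integrator input matrix `B = [0; I₃]`. -/
def Bmat : Matrix (Fin 3 ⊕ Fin 3) (Fin 3) ℝ :=
  Matrix.of fun i j => Sum.casesOn i (fun _ => (0 : ℝ)) (fun i' => if i' = j then 1 else 0)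

open Classical in
/-- Main stability theorem: for the double integrator `ẋ = Ax + B sat(-γBᵀPx)`
with the radial saturation onto `C`, the ellipsoid `{x : xᵀPx ≤ ε}` is forward
invariant, `V̇ ≤ -αV` holds inside it, and solutions converge exponentially. -/
theorem stmt14 (P : Matrix (Fin 3 ⊕ Fin 3) (Fin 3 ⊕ Fin 3) ℝ)
    (α ρ ε γ : ℝ) (hα : 0 < α) (hρ : 0 < ρ) (hε : 0 < ε) (hγ : 1 ≤ γ)
    (hP : P.PosDef)
    (hLyap : ((-(α • P)) -
      ((Amat - Bmat * Bmatᵀ * P)ᵀ * P + P * (Amat - Bmat * Bmatᵀ * P))).PosSemidef)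
    (hcert : ∀ y : Fin 3 ⊕ Fin 3 → ℝ, y ⬝ᵥ (P *ᵥ y) ≤ ε →
      (Bmatᵀ *ᵥ (P *ᵥ y)) ⬝ᵥ (Bmatᵀ *ᵥ (P *ᵥ y)) ≤ ρ)
    (C : Set (Fin 3 → ℝ)) (hC : IsCompact C) (hconv : Convex ℝ C)
    (hball : {v : Fin 3 → ℝ | v ⬝ᵥ v ≤ ρ} ⊆ C)
    (h0 : (0 : Fin 3 → ℝ) ∈ interior C)
    (lstar : (Fin 3 → ℝ) → ℝ)
    (hlstar : ∀ v ∉ C, IsGreatest {l : ℝ | 0 ≤ l ∧ l • v ∈ C} (lstar v))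
    (sat : (Fin 3 → ℝ) → (Fin 3 → ℝ))
    (hsat : ∀ v, sat v = if v ∈ C then v else lstar v • v)
    (x : ℝ → (Fin 3 ⊕ Fin 3 → ℝ))
    (hode : ∀ t : ℝ, HasDerivAt x
      (Amat *ᵥ x t + Bmat *ᵥ sat (-(γ • (Bmatᵀ *ᵥ (P *ᵥ x t))))) t)
    (hx0 : x 0 ⬝ᵥ (P *ᵥ x 0) ≤ ε) :
    (∀ t : ℝ, x t ⬝ᵥ (P *ᵥ x t) ≤ ε →
      deriv (fun s => x s ⬝ᵥ (P *ᵥ x s)) t ≤ -α * (x t ⬝ᵥ (P *ᵥ x t))) ∧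
    ∀ t : ℝ, 0 ≤ t →
      x t ⬝ᵥ (P *ᵥ x t) ≤ ε ∧
      x t ⬝ᵥ (P *ᵥ x t) ≤ Real.exp (-α * t) * (x 0 ⬝ᵥ (P *ᵥ x 0)) := by
  have hγ0 : (0:ℝ) < γ := lt_of_lt_of_le one_pos hγ
  have Psym : Pᵀ = P := by simpa using hP.isHermitian.eq
  -- derivative of V
  set X : ℝ → (Fin 3 ⊕ Fin 3 → ℝ) :=
    fun t => Amat *ᵥ x t + Bmat *ᵥ sat (-(γ • (Bmatᵀ *ᵥ (P *ᵥ x t)))) with hX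
  set d : ℝ → ℝ := fun t => X t ⬝ᵥ (P *ᵥ x t) + x t ⬝ᵥ (P *ᵥ X t) with hd
  have hVd : ∀ t, HasDerivAt (fun s => x s ⬝ᵥ (P *ᵥ x s)) (d t) t :=
    fun t => quadDeriv' P x (X t) t (hode t)
  -- pointwise derivative bound
  have hbound : ∀ t, x t ⬝ᵥ (P *ᵥ x t) ≤ ε → d t ≤ -α * (x t ⬝ᵥ (P *ᵥ x t)) := by
    intro t hft
    set xt := x t with hxt
    set pxt := P *ᵥ xt with hpxt
    set w : Fin 3 → ℝ := Bmatᵀ *ᵥ pxt with hw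
    set u : Fin 3 → ℝ := -(γ • w) with hu
    set s : ℝ := w ⬝ᵥ w with hs
    have hsρ : s ≤ ρ := hcert xt hft
    have hs0 : 0 ≤ s := Finset.sum_nonneg fun i _ => mul_self_nonneg (w i)
    -- saturation is a scaled version
    obtain ⟨κ, hκ1, hsu⟩ : ∃ κ : ℝ, 1 ≤ κ ∧ sat u = -(κ • w) := by
      by_cases hmem : u ∈ C
      · exact ⟨γ, hγ, by rw [hsat u, if_pos hmem]⟩
      · refine ⟨γ * lstar u, ?_, ?_⟩
        · have hmem2 : γ⁻¹ ∈ {l : ℝ | 0 ≤ l ∧ l • u ∈ C} := by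
            constructor
            · positivity
            · have he : γ⁻¹ • u = -w := by
                rw [hu, smul_neg, smul_smul, inv_mul_cancel₀ (ne_of_gt hγ0), one_smul]
              rw [he]
              apply hball
              show (-w) ⬝ᵥ (-w) ≤ ρ
              rw [neg_dotProduct, dotProduct_neg, neg_neg]
              exact hsρ
          have hle := (hlstar u hmem).2 hmem2
          calc (1:ℝ) = γ * γ⁻¹ := (mul_inv_cancel₀ (ne_of_gt hγ0)).symm
            _ ≤ γ * lstar u := mul_le_mul_of_nonneg_left hle (le_of_lt hγ0)
        · rw [hsat u, if_neg hmem, hu, smul_neg, smul_smul, mul_comm]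
    -- compute d t
    have hBw1 : (Bmat *ᵥ w) ⬝ᵥ pxt = s := by
      rw [dotProduct_comm, dpT']
    have hBw2 : xt ⬝ᵥ (P *ᵥ (Bmat *ᵥ w)) = s := by
      rw [dpT', Psym, ← hpxt, dpT', dotProduct_comm]
    have hdt : d t = (Amat *ᵥ xt) ⬝ᵥ pxt + xt ⬝ᵥ (P *ᵥ (Amat *ᵥ xt)) - 2 * κ * s := by
      rw [hd]
      show (Amat *ᵥ xt + Bmat *ᵥ sat u) ⬝ᵥ pxt + xt ⬝ᵥ (P *ᵥ (Amat *ᵥ xt + Bmat *ᵥ sat u)) = _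
      rw [hsu]
      rw [Matrix.mulVec_neg, Matrix.mulVec_smul]
      rw [add_dotProduct, Matrix.mulVec_add, dotProduct_add]
      rw [neg_dotProduct, smul_dotProduct, Matrix.mulVec_neg, Matrix.mulVec_smul,
        dotProduct_neg, dotProduct_smul]
      rw [hBw1, hBw2]
      simp only [smul_eq_mul]
      ring
    -- Lyapunov inequality
    have hLy := hLyap.dotProduct_mulVec_nonneg xt
    have hLy' : 0 ≤ xt ⬝ᵥ (((-(α • P)) -
        ((Amat - Bmat * Bmatᵀ * P)ᵀ * P + P * (Amat - Bmat * Bmatᵀ * P))) *ᵥ xt) := by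
      simpa using hLy
    have hexp : xt ⬝ᵥ (((-(α • P)) -
        ((Amat - Bmat * Bmatᵀ * P)ᵀ * P + P * (Amat - Bmat * Bmatᵀ * P))) *ᵥ xt)
        = -α * (xt ⬝ᵥ pxt) - ((Amat *ᵥ xt) ⬝ᵥ pxt + xt ⬝ᵥ (P *ᵥ (Amat *ᵥ xt)) - 2 * s) := by
      have e1 : xt ⬝ᵥ ((Amatᵀ * P) *ᵥ xt) = (Amat *ᵥ xt) ⬝ᵥ pxt := by
        rw [← Matrix.mulVec_mulVec, dpT', Matrix.transpose_transpose, hpxt]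
      have e2 : xt ⬝ᵥ ((P * Amat) *ᵥ xt) = xt ⬝ᵥ (P *ᵥ (Amat *ᵥ xt)) := by
        rw [← Matrix.mulVec_mulVec]
      have ecore : xt ⬝ᵥ ((P * (Bmat * Bmatᵀ) * P) *ᵥ xt) = s := by
        have hh : (P * (Bmat * Bmatᵀ) * P) *ᵥ xt = P *ᵥ (Bmat *ᵥ w) := by
          rw [hw, hpxt]
          simp [Matrix.mulVec_mulVec, Matrix.mul_assoc]
        rw [hh]
        exact hBw2
      have e3 : xt ⬝ᵥ (((Bmat * Bmatᵀ * P)ᵀ * P) *ᵥ xt) = s := by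
        rw [Matrix.transpose_mul, Matrix.transpose_mul, Matrix.transpose_transpose, Psym]
        exact ecore
      have e4 : xt ⬝ᵥ ((P * (Bmat * Bmatᵀ * P)) *ᵥ xt) = s := by
        rw [← Matrix.mul_assoc]
        exact ecore
      rw [Matrix.sub_mulVec, dotProduct_sub, Matrix.neg_mulVec, dotProduct_neg,
        Matrix.smul_mulVec, dotProduct_smul]
      rw [Matrix.add_mulVec, dotProduct_add]
      rw [Matrix.transpose_sub, Matrix.sub_mul, Matrix.mul_sub]
      rw [Matrix.sub_mulVec, dotProduct_sub, Matrix.sub_mulVec, dotProduct_sub]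
      rw [e1, e2, e3, e4, ← hpxt]
      ring_nf
    rw [hdt]
    rw [hexp] at hLy'
    have hκs : s ≤ κ * s := le_mul_of_one_le_left hs0 hκ1
    have : xt ⬝ᵥ pxt = x t ⬝ᵥ (P *ᵥ x t) := rfl
    nlinarith
  constructor
  · intro t hft
    rw [(hVd t).deriv]
    exact hbound t hft
  · exact auxInv' (fun s => x s ⬝ᵥ (P *ᵥ x s)) d α ε hα hε hVd hx0 hbound
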